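/- arXiv:2006.14562 — 6 statements merged into one kernel-verified Lean document; each statement's English description precedes it below -/
import Mathlib

section
/- Let h ≥ 2, let (W_i)_{i=0}^{h-1} be a partition of the nonnegative integers into nonempty pairwise disjoint sets, let (g_i)_{i=0}^∞ be a G-adic sequence, and let A = ⋃_{i=0}^{h-1} A_G(W_i). Then every positive integer n can be written as a sum of ℓ elements of A for some integer ℓ with 1 ≤ ℓ ≤ h. -/
open Finset

/-- A `𝒢`-adic sequence: strictly increasing, `g 0 = 1`, and `g i ∣ g (i+1)` for all `i`. -/
def GadicSeq (g : ℕ → ℕ) : Prop :=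
  StrictMono g ∧ g 0 = 1 ∧ ∀ i, g i ∣ g (i + 1)

/-- The set `A_𝒢(W)` of positive integers `∑_{j ∈ F} x j * g j` with `F` a nonempty finite
subset of `W` and `x j ∈ [1, d_{j+1} - 1]` where `d_{j+1} = g (j+1) / g j`. -/
def AG (g : ℕ → ℕ) (W : Set ℕ) : Set ℕ :=
  { n | ∃ (F : Finset ℕ) (x : ℕ → ℕ), F.Nonempty ∧ ↑F ⊆ W ∧
        (∀ j ∈ F, 1 ≤ x j ∧ x j ≤ g (j + 1) / g j - 1) ∧
        n = ∑ j ∈ F, x j * g j }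

/-- `n` is a sum of `h` (not necessarily distinct) elements of `A`. -/
def IsSumOf (A : Set ℕ) (h n : ℕ) : Prop :=
  ∃ f : Fin h → ℕ, (∀ i, f i ∈ A) ∧ n = ∑ i, f i

/-- `A` is an asymptotic basis of order `h`. -/
def AsympBasis (h : ℕ) (A : Set ℕ) : Prop :=
  ∃ N, ∀ n ≥ N, IsSumOf A h n

/-- `A` is a minimal asymptotic basis of order `h`. -/
def MinAsympBasis (h : ℕ) (A : Set ℕ) : Prop :=
  AsympBasis h A ∧ ∀ B ⊂ A, ¬ AsympBasis h B

open Finset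

lemma gadic_rep (g : ℕ → ℕ) (hg : GadicSeq g) :
    ∀ k, ∀ n < g k, ∃ (F : Finset ℕ) (x : ℕ → ℕ), F ⊆ Finset.range k ∧
      (∀ j ∈ F, 1 ≤ x j ∧ x j ≤ g (j + 1) / g j - 1) ∧ n = ∑ j ∈ F, x j * g j := by
  obtain ⟨hmono, h0, hdvd⟩ := hg
  intro k
  induction k with
  | zero =>
    intro n hn
    rw [h0, Nat.lt_one_iff] at hn
    exact ⟨∅, fun _ => 0, by simp, by simp, by simp [hn]⟩
  | succ k ih =>
    intro n hn
    have hgk : 0 < g k := by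
      rcases Nat.eq_zero_or_pos k with rfl | hk
      · omega
      · calc 0 < g 0 := by omega
          _ < g k := hmono hk
    have hr : n % g k < g k := Nat.mod_lt _ hgk
    obtain ⟨F, x, hFsub, hx, hsum⟩ := ih (n % g k) hr
    have hq : n / g k < g (k + 1) / g k := by
      rw [Nat.lt_div_iff_mul_lt' (hdvd k)]
      calc g k * (n / g k) ≤ n := Nat.mul_div_le n (g k)
        _ < g (k + 1) := hn
    rcases Nat.eq_zero_or_pos (n / g k) with hq0 | hqpos
    · refine ⟨F, x, hFsub.trans (Finset.range_subset_range.2 (Nat.le_succ k)), hx, ?_⟩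
      have : n = n % g k := by
        conv_lhs => rw [← Nat.div_add_mod n (g k)]
        rw [hq0]; ring
      rw [this, hsum]
    · have hkF : k ∉ F := fun hk => absurd (hFsub hk) (by simp)
      refine ⟨insert k F, fun j => if j = k then n / g k else x j, ?_, ?_, ?_⟩
      · intro j hj
        rcases Finset.mem_insert.1 hj with rfl | hj
        · simp
        · exact Finset.range_subset_range.2 (Nat.le_succ k) (hFsub hj)
      · intro j hj
        rcases Finset.mem_insert.1 hj with rfl | hj
        · simp only [if_pos rfl]
          exact ⟨hqpos, Nat.le_sub_one_of_lt hq⟩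
        · have hne : j ≠ k := fun e => hkF (e ▸ hj)
          simpa [hne] using hx j hj
      · rw [Finset.sum_insert hkF]
        have : ∑ j ∈ F, (if j = k then n / g k else x j) * g j = ∑ j ∈ F, x j * g j := by
          apply Finset.sum_congr rfl
          intro j hj
          have hne : j ≠ k := fun e => hkF (e ▸ hj)
          simp [hne]
        rw [this, ← hsum]
        simp only [if_pos rfl]
        conv_lhs => rw [← Nat.div_add_mod n (g k)]
        simp [Nat.mul_comm]
theorem gadic_sum_of_at_most_h (h : ℕ) (hh : 2 ≤ h) (g : ℕ → ℕ) (hg : GadicSeq g)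
    (W : Fin h → Set ℕ) (hW1 : ∀ i, (W i).Nonempty)
    (hW2 : ∀ i j, i ≠ j → Disjoint (W i) (W j))
    (hW3 : ⋃ i, W i = Set.univ)
    (n : ℕ) (hn : 0 < n) :
    ∃ ℓ, 1 ≤ ℓ ∧ ℓ ≤ h ∧ IsSumOf (⋃ i, AG g (W i)) ℓ n := by
  classical
  have hlt : n < g (n + 1) := lt_of_lt_of_le (Nat.lt_succ_self n) (hg.1.le_apply)
  obtain ⟨F, x, hFsub, hx, hsum⟩ := gadic_rep g hg (n + 1) n hlt
  -- each j belongs to some W i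
  have hmem : ∀ j : ℕ, ∃ i, j ∈ W i := by
    intro j
    have : j ∈ ⋃ i, W i := hW3 ▸ Set.mem_univ j
    simpa using this
  set Fi : Fin h → Finset ℕ := fun i => F.filter (fun j => j ∈ W i) with hFi
  set S : Finset (Fin h) := Finset.univ.filter (fun i => (Fi i).Nonempty) with hS
  set term : Fin h → ℕ := fun i => ∑ j ∈ Fi i, x j * g j with hterm
  -- the full decomposition
  have hsplit : ∑ i : Fin h, term i = n := by
    rw [hsum]
    simp only [hterm, hFi, Finset.sum_filter]
    rw [Finset.sum_comm]
    apply Finset.sum_congr rfl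
    intro j hj
    obtain ⟨i₀, hi₀⟩ := hmem j
    rw [Finset.sum_eq_single_of_mem i₀ (Finset.mem_univ i₀)]
    · simp [hi₀]
    · intro i _ hne
      have : j ∉ W i := fun hji => (hW2 i i₀ hne).ne_of_mem hji hi₀ rfl
      simp [this]
  have hsplitS : ∑ i ∈ S, term i = n := by
    rw [← hsplit]
    apply Finset.sum_subset (Finset.filter_subset _ _)
    intro i _ hiS
    have : ¬ (Fi i).Nonempty := by simpa [hS] using hiS
    simp [hterm, Finset.not_nonempty_iff_eq_empty.1 this]
  -- S is nonempty
  have hFne : F.Nonempty := by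
    rcases F.eq_empty_or_nonempty with rfl | hne
    · simp at hsum; omega
    · exact hne
  obtain ⟨j₀, hj₀⟩ := hFne
  obtain ⟨i₀, hi₀⟩ := hmem j₀
  have hSne : S.Nonempty := by
    refine ⟨i₀, ?_⟩
    simp only [hS, Finset.mem_filter, Finset.mem_univ, true_and]
    exact ⟨j₀, Finset.mem_filter.2 ⟨hj₀, hi₀⟩⟩
  refine ⟨S.card, Finset.card_pos.2 hSne, le_trans (Finset.card_filter_le _ _) (by simp), ?_⟩
  -- build the function
  refine ⟨fun t => term (S.equivFin.symm t).1, ?_, ?_⟩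
  · intro t
    set s := S.equivFin.symm t
    have hs : s.1 ∈ S := s.2
    have hsne : (Fi s.1).Nonempty := (Finset.mem_filter.1 hs).2
    refine Set.mem_iUnion.2 ⟨s.1, F.filter (fun j => j ∈ W s.1), x, hsne, ?_, ?_, rfl⟩
    · intro j hj
      exact (Finset.mem_filter.1 hj).2
    · intro j hj
      exact hx j (Finset.mem_filter.1 hj).1
  · rw [← hsplitS]
    rw [← Finset.sum_attach S term]
    exact (Equiv.sum_comp S.equivFin.symm (fun s => term s.1)).symm
end

section
/- Let h ≥ 2, let (W_i)_{i=0}^{h-1} be a partition of the nonnegative integers into nonempty pairwise disjoint sets, let (g_i)_{i=0}^∞ be a G-adic sequence, and let A = ⋃_{i=0}^{h-1} A_G(W_i). If n ≥ h and n is a sum of ℓ elements of A for some ℓ with 1 ≤ ℓ < h, then n is also a sum of ℓ+1 elements of A. -/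
open Finset

lemma gpos {g : ℕ → ℕ} (hg : GadicSeq g) (j : ℕ) : 1 ≤ g j := by
  obtain ⟨h1, h2, _⟩ := hg
  calc 1 = g 0 := h2.symm
    _ ≤ g j := h1.monotone (Nat.zero_le j)

lemma dge2 {g : ℕ → ℕ} (hg : GadicSeq g) (m : ℕ) : 2 ≤ g (m + 1) / g m := by
  obtain ⟨k, hk⟩ := hg.2.2 m
  have h1 : 1 ≤ g m := gpos hg m
  have h2 : g m < g (m + 1) := hg.1 (Nat.lt_succ_self m)
  have hk2 : 2 ≤ k := by nlinarith
  rw [hk, Nat.mul_div_cancel_left _ (by omega)]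
  exact hk2

lemma AG_pos {g : ℕ → ℕ} (hg : GadicSeq g) {W : Set ℕ} {a : ℕ} (ha : a ∈ AG g W) : 1 ≤ a := by
  obtain ⟨F, x, hF, _, hx, rfl⟩ := ha
  obtain ⟨j, hj⟩ := hF
  calc 1 ≤ x j * g j := Nat.one_le_iff_ne_zero.2
          (Nat.mul_ne_zero (by have := (hx j hj).1; omega) (by have := gpos hg j; omega))
    _ ≤ ∑ j ∈ F, x j * g j :=
        Finset.single_le_sum (f := fun j => x j * g j) (fun i _ => Nat.zero_le _) hj

lemma AG_single {g : ℕ → ℕ} {W : Set ℕ} {j c : ℕ} (hjW : j ∈ W) (h1 : 1 ≤ c)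
    (h2 : c ≤ g (j + 1) / g j - 1) : c * g j ∈ AG g W := by
  refine ⟨{j}, fun _ => c, Finset.singleton_nonempty j, by simpa using hjW, ?_, by simp⟩
  intro k hk
  simp only [Finset.mem_singleton] at hk
  subst hk
  exact ⟨h1, h2⟩

lemma AG_split {h : ℕ} {g : ℕ → ℕ} (hg : GadicSeq g) {W : Fin h → Set ℕ}
    (hW3 : ⋃ i, W i = Set.univ) {a : ℕ} (ha : a ∈ ⋃ i, AG g (W i)) (h2 : 2 ≤ a) :
    ∃ b c, b ∈ (⋃ i, AG g (W i)) ∧ c ∈ (⋃ i, AG g (W i)) ∧ a = b + c := by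
  rw [Set.mem_iUnion] at ha
  obtain ⟨i, F, x, hF, hFW, hx, rfl⟩ := ha
  obtain ⟨y, hy⟩ := hF
  rcases F.eq_singleton_or_nontrivial hy with hsing | hnt
  · -- F = {y}
    subst hsing
    rw [Finset.sum_singleton] at h2 ⊢
    have hxy := hx y (Finset.mem_singleton_self y)
    have hyW : y ∈ W i := hFW (Finset.mem_singleton_self y)
    by_cases hx2 : 2 ≤ x y
    · refine ⟨1 * g y, (x y - 1) * g y, ?_, ?_, by rw [← Nat.add_mul]; congr 1; omega⟩
      · exact Set.mem_iUnion.2 ⟨i, AG_single hyW (le_refl 1) (by omega)⟩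
      · exact Set.mem_iUnion.2 ⟨i, AG_single hyW (by omega) (by omega)⟩
    · -- x y = 1, so a = g y ≥ 2, hence y ≥ 1
      have hxy1 : x y = 1 := by omega
      rw [hxy1, one_mul] at h2 ⊢
      have hy1 : y ≠ 0 := by
        intro h0; rw [h0, hg.2.1] at h2; omega
      obtain ⟨m, rfl⟩ : ∃ m, y = m + 1 := ⟨y - 1, by omega⟩
      have hmW : m ∈ ⋃ i, W i := by rw [hW3]; trivial
      rw [Set.mem_iUnion] at hmW
      obtain ⟨i', hmi'⟩ := hmW
      set d := g (m + 1) / g m with hd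
      have hd2 : 2 ≤ d := dge2 hg m
      have hdm : d * g m = g (m + 1) := Nat.div_mul_cancel (hg.2.2 m)
      refine ⟨1 * g m, (d - 1) * g m, ?_, ?_, ?_⟩
      · exact Set.mem_iUnion.2 ⟨i', AG_single hmi' (le_refl 1) (by omega)⟩
      · exact Set.mem_iUnion.2 ⟨i', AG_single hmi' (by omega) (by omega)⟩
      · rw [← Nat.add_mul]
        have h1d : 1 + (d - 1) = d := by omega
        rw [h1d, hdm]
  · -- F nontrivial
    obtain ⟨u, hu, v, hv, huv⟩ := hnt
    have hu' : u ∈ F := hu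
    have hv' : v ∈ F := hv
    have hvu : v ∈ F.erase u := Finset.mem_erase.2 ⟨Ne.symm huv, hv'⟩
    refine ⟨x u * g u, ∑ j ∈ F.erase u, x j * g j, ?_, ?_, (Finset.add_sum_erase F _ hu').symm⟩
    · exact Set.mem_iUnion.2 ⟨i, AG_single (hFW hu') (hx u hu').1 (hx u hu').2⟩
    · exact Set.mem_iUnion.2 ⟨i, F.erase u, x, ⟨v, hvu⟩,
        fun j hj => hFW (Finset.erase_subset u F hj),
        fun j hj => hx j (Finset.erase_subset u F hj), rfl⟩

theorem gadic_sum_lengthen (h : ℕ) (hh : 2 ≤ h) (g : ℕ → ℕ) (hg : GadicSeq g)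
    (W : Fin h → Set ℕ) (hW1 : ∀ i, (W i).Nonempty)
    (hW2 : ∀ i j, i ≠ j → Disjoint (W i) (W j))
    (hW3 : ⋃ i, W i = Set.univ)
    (n : ℕ) (hn : h ≤ n) (ℓ : ℕ) (hℓ1 : 1 ≤ ℓ) (hℓ2 : ℓ < h)
    (hsum : IsSumOf (⋃ i, AG g (W i)) ℓ n) :
    IsSumOf (⋃ i, AG g (W i)) (ℓ + 1) n := by
  obtain ⟨f, hf, hnf⟩ := hsum
  have hfpos : ∀ i, 1 ≤ f i := by
    intro i
    obtain ⟨i', hi'⟩ := Set.mem_iUnion.1 (hf i)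
    exact AG_pos hg hi'
  have hex : ∃ k, 2 ≤ f k := by
    by_contra hc
    push_neg at hc
    have h1 : ∀ i, f i = 1 := fun i => by have := hfpos i; have := hc i; omega
    have : n = ℓ := by
      rw [hnf]
      simp [h1]
    omega
  obtain ⟨k, hk⟩ := hex
  obtain ⟨b, c, hb, hc, hbc⟩ := AG_split hg hW3 (hf k) hk
  refine ⟨Fin.cons b (Function.update f k c), ?_, ?_⟩
  · intro i
    refine Fin.cases ?_ ?_ i
    · simpa using hb
    · intro j
      simp only [Fin.cons_succ]
      by_cases hjk : j = k
      · subst hjk; simpa [Function.update_self] using hc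
      · rw [Function.update_of_ne hjk]; exact hf j
  · rw [Fin.sum_cons]
    rw [Finset.sum_update_of_mem (Finset.mem_univ k), ← Finset.erase_eq]
    have hsplit : ∑ i, f i = f k + ∑ i ∈ Finset.univ.erase k, f i :=
      (Finset.add_sum_erase _ _ (Finset.mem_univ k)).symm
    omega
end

section
/- Let h ≥ 2, let (W_i)_{i=0}^{h-1} be a partition of the nonnegative integers into nonempty pairwise disjoint sets, and let (g_i)_{i=0}^∞ be a G-adic sequence. Then the set A = {0} ∪ ⋃_{i=0}^{h-1} A_G(W_i) is a basis of order h; that is, every nonnegative integer is a sum of h not necessarily distinct elements of A. -/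
open Finset

lemma gadic_repr (g : ℕ → ℕ) (hg : GadicSeq g) :
    ∀ n : ℕ, ∃ (F : Finset ℕ) (x : ℕ → ℕ),
      (∀ j ∈ F, 1 ≤ x j ∧ x j ≤ g (j + 1) / g j - 1) ∧
      (∀ j ∈ F, g j ≤ n) ∧ n = ∑ j ∈ F, x j * g j := by
  classical
  obtain ⟨hmono, h0, hdvd⟩ := hg
  have hgpos : ∀ i, 0 < g i := fun i => by
    have := hmono.monotone (Nat.zero_le i); omega
  intro n
  induction n using Nat.strong_induction_on with
  | _ n ih =>
    rcases Nat.eq_zero_or_pos n with rfl | hn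
    · exact ⟨∅, fun _ => 0, by simp, by simp, by simp⟩
    · set k := Nat.findGreatest (fun i => g i ≤ n) n with hk
      have hgk : g k ≤ n :=
        Nat.findGreatest_spec (P := fun i => g i ≤ n) (Nat.zero_le n) (by show g 0 ≤ n; omega)
      have hub : n < g (k + 1) := by
        by_contra h'
        push_neg at h'
        have h1 : k + 1 ≤ g (k + 1) := hmono.le_apply
        exact Nat.findGreatest_is_greatest (Nat.lt_succ_self k) (le_trans h1 h') h'
      set q := n / g k with hq
      set r := n % g k with hrdef
      have hq1 : 1 ≤ q := (Nat.one_le_div_iff (hgpos k)).mpr hgk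
      have hq2 : q < g (k + 1) / g k := by
        have h1 : q * g k ≤ n := Nat.div_mul_le_self n (g k)
        have h2 : g (k + 1) / g k * g k = g (k + 1) := Nat.div_mul_cancel (hdvd k)
        have h3 : q * g k < g (k + 1) / g k * g k := by omega
        exact Nat.lt_of_mul_lt_mul_right h3
      have hr : r < g k := Nat.mod_lt _ (hgpos k)
      obtain ⟨F', x', hx', hle', hsum'⟩ := ih r (lt_of_lt_of_le hr hgk)
      have hkF : k ∉ F' := fun hk' => absurd (hle' k hk') (not_le.mpr hr)
      refine ⟨insert k F', Function.update x' k q, ?_, ?_, ?_⟩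
      · intro j hj
        rcases Finset.mem_insert.mp hj with rfl | hj'
        · simp only [Function.update_self]
          exact ⟨hq1, Nat.le_sub_one_of_lt hq2⟩
        · have : j ≠ k := fun e => hkF (e ▸ hj')
          rw [Function.update_of_ne this]
          exact hx' j hj'
      · intro j hj
        rcases Finset.mem_insert.mp hj with rfl | hj'
        · exact hgk
        · exact le_trans (hle' j hj') (le_trans (le_of_lt hr) hgk)
      · rw [Finset.sum_insert hkF, Function.update_self]
        have : ∑ j ∈ F', Function.update x' k q j * g j = ∑ j ∈ F', x' j * g j := by
          refine Finset.sum_congr rfl fun j hj => ?_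
          rw [Function.update_of_ne (fun e => hkF (by rw [← e]; exact hj))]
        rw [this, ← hsum', mul_comm]
        exact (Nat.div_add_mod n (g k)).symm

theorem gadic_basis_with_zero (h : ℕ) (hh : 2 ≤ h) (g : ℕ → ℕ) (hg : GadicSeq g)
    (W : Fin h → Set ℕ) (hW1 : ∀ i, (W i).Nonempty)
    (hW2 : ∀ i j, i ≠ j → Disjoint (W i) (W j))
    (hW3 : ⋃ i, W i = Set.univ)
    (n : ℕ) :
    IsSumOf ({0} ∪ ⋃ i, AG g (W i)) h n := by
  classical
  obtain ⟨F, x, hx, -, hsum⟩ := gadic_repr g hg n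
  have hmem : ∀ j : ℕ, ∃ i, j ∈ W i := by
    intro j
    have : j ∈ ⋃ i, W i := hW3 ▸ Set.mem_univ j
    simpa using this
  choose c hc using hmem
  refine ⟨fun i => ∑ j ∈ F.filter (fun j => c j = i), x j * g j, ?_, ?_⟩
  · intro i
    rcases (F.filter (fun j => c j = i)).eq_empty_or_nonempty with he | hne
    · left; simp [he]
    · right
      refine Set.mem_iUnion.mpr ⟨i, F.filter (fun j => c j = i), x, hne, ?_, ?_, rfl⟩
      · intro j hj
        simp only [coe_filter, Set.mem_setOf_eq] at hj
        exact hj.2 ▸ hc j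
      · intro j hj
        exact hx j (Finset.mem_filter.mp hj).1
  · rw [hsum]
    exact (Finset.sum_fiberwise F c (fun j => x j * g j)).symm
end

section
/- Let (g_i)_{i=0}^∞ be a G-adic sequence with quotients d_i = g_i/g_{i-1}. Let (u_i)_{i=1}^p be a strictly increasing finite sequence of nonnegative integers and let (v_j)_{j=1}^q be a finite sequence of not necessarily distinct nonnegative integers, with x_i ∈ [1, d_{u_i+1}−1] for all i ∈ [1,p] and y_j ∈ [1, d_{v_j+1}−1] for all j ∈ [1,q]. If Σ_{i=1}^p x_i g_{u_i} = Σ_{j=1}^q y_j g_{v_j}, then for every k ∈ [1,p], the difference Σ_{i : u_i ≤ u_k} x_i g_{u_i} − Σ_{j : v_j ≤ u_k} y_j g_{v_j} is divisible by g_{u_k + 1}. -/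
open Finset

theorem gadic_partial_sums_congruence (g : ℕ → ℕ) (hg : GadicSeq g)
    (p q : ℕ) (u v x y : ℕ → ℕ)
    (hu : ∀ i j, 1 ≤ i → i < j → j ≤ p → u i < u j)
    (hx : ∀ i ∈ Finset.Icc 1 p, 1 ≤ x i ∧ x i ≤ g (u i + 1) / g (u i) - 1)
    (hy : ∀ j ∈ Finset.Icc 1 q, 1 ≤ y j ∧ y j ≤ g (v j + 1) / g (v j) - 1)
    (heq : ∑ i ∈ Finset.Icc 1 p, x i * g (u i) = ∑ j ∈ Finset.Icc 1 q, y j * g (v j)) :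
    ∀ k ∈ Finset.Icc 1 p,
      (g (u k + 1) : ℤ) ∣
        (∑ i ∈ (Finset.Icc 1 p).filter (fun i => u i ≤ u k), (x i : ℤ) * g (u i)) -
          ∑ j ∈ (Finset.Icc 1 q).filter (fun j => v j ≤ u k), (y j : ℤ) * g (v j) := by
  obtain ⟨hmono, hg0, hdvd⟩ := hg
  have hchain : ∀ a b, a ≤ b → g a ∣ g b := by
    intro a b hab
    induction b with
    | zero => simp [Nat.le_zero.mp hab]
    | succ b ih =>
      rcases Nat.lt_or_ge a (b+1) with h | h
      · exact (ih (Nat.lt_succ_iff.mp h)).trans (hdvd b)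
      · rw [le_antisymm hab h]
  intro k hk
  set m := u k with hm
  have hsplit : ∀ (n : ℕ) (w z : ℕ → ℕ),
      (∑ j ∈ (Finset.Icc 1 n).filter (fun j => w j ≤ m), (z j : ℤ) * g (w j))
      = (∑ j ∈ Finset.Icc 1 n, (z j : ℤ) * g (w j))
        - ∑ j ∈ (Finset.Icc 1 n).filter (fun j => ¬ w j ≤ m), (z j : ℤ) * g (w j) := by
    intro n w z
    rw [eq_sub_iff_add_eq, Finset.sum_filter_add_sum_filter_not]
  have heqZ : (∑ i ∈ Finset.Icc 1 p, (x i : ℤ) * g (u i))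
      = ∑ j ∈ Finset.Icc 1 q, (y j : ℤ) * g (v j) := by
    exact_mod_cast congrArg (Nat.cast (R := ℤ)) heq
  have hd1 : (g (m+1) : ℤ) ∣ ∑ j ∈ (Finset.Icc 1 q).filter (fun j => ¬ v j ≤ m),
      (y j : ℤ) * g (v j) := by
    apply Finset.dvd_sum
    intro j hj
    exact Dvd.dvd.mul_left (Int.natCast_dvd_natCast.mpr
      (hchain _ _ (Nat.not_le.mp (Finset.mem_filter.mp hj).2))) _
  have hd2 : (g (m+1) : ℤ) ∣ ∑ i ∈ (Finset.Icc 1 p).filter (fun i => ¬ u i ≤ m),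
      (x i : ℤ) * g (u i) := by
    apply Finset.dvd_sum
    intro i hi
    exact Dvd.dvd.mul_left (Int.natCast_dvd_natCast.mpr
      (hchain _ _ (Nat.not_le.mp (Finset.mem_filter.mp hi).2))) _
  rw [hsplit, hsplit, heqZ]
  have : (∑ j ∈ Finset.Icc 1 q, (y j : ℤ) * g (v j))
      - (∑ i ∈ (Finset.Icc 1 p).filter (fun i => ¬ u i ≤ m), (x i : ℤ) * g (u i))
      - ((∑ j ∈ Finset.Icc 1 q, (y j : ℤ) * g (v j))
        - ∑ j ∈ (Finset.Icc 1 q).filter (fun j => ¬ v j ≤ m), (y j : ℤ) * g (v j))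
      = (∑ j ∈ (Finset.Icc 1 q).filter (fun j => ¬ v j ≤ m), (y j : ℤ) * g (v j))
        - ∑ i ∈ (Finset.Icc 1 p).filter (fun i => ¬ u i ≤ m), (x i : ℤ) * g (u i) := by
    ring
  rw [this]
  exact dvd_sub hd1 hd2
end

section
/- Let (g_i)_{i=0}^∞ be a G-adic sequence with quotients d_i = g_i/g_{i-1}. Let (u_i)_{i=1}^p be a strictly increasing finite sequence of nonnegative integers and let (v_j)_{j=1}^q be a finite sequence of not necessarily distinct nonnegative integers, with x_i ∈ [1, d_{u_i+1}−1] for all i ∈ [1,p] and y_j ∈ [1, d_{v_j+1}−1] for all j ∈ [1,q]. If Σ_{i=1}^p x_i g_{u_i} = Σ_{j=1}^q y_j g_{v_j}, then for every k ∈ [1,p], Σ_{i : u_i ≤ u_k} x_i g_{u_i} ≤ Σ_{j : v_j ≤ u_k} y_j g_{v_j}. -/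
open Finset

lemma gadic_dvd_of_le {g : ℕ → ℕ} (hg : GadicSeq g) {a b : ℕ} (hab : a ≤ b) :
    g a ∣ g b := by
  induction b, hab using Nat.le_induction with
  | base => exact dvd_rfl
  | succ n hn ih => exact ih.trans (hg.2.2 n)

lemma gadic_pos {g : ℕ → ℕ} (hg : GadicSeq g) (i : ℕ) : 0 < g i := by
  have h := hg.1.monotone (Nat.zero_le i)
  have h0 := hg.2.1
  omega

lemma gadic_term_bound {g : ℕ → ℕ} (hg : GadicSeq g) {t c : ℕ}
    (hc : c ≤ g (t + 1) / g t - 1) : c * g t ≤ g (t + 1) - g t := by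
  have hd : g t ∣ g (t + 1) := hg.2.2 t
  have hpos := gadic_pos hg t
  calc c * g t ≤ (g (t + 1) / g t - 1) * g t := Nat.mul_le_mul_right _ hc
    _ = g (t + 1) / g t * g t - 1 * g t := Nat.sub_mul _ _ _
    _ = g (t + 1) - g t := by rw [Nat.div_mul_cancel hd, one_mul]

lemma gadic_telescope {g : ℕ → ℕ} (hg : GadicSeq g) (n : ℕ) :
    ∑ t ∈ Finset.range n, (g (t + 1) - g t) = g n - 1 := by
  induction n with
  | zero => simp [hg.2.1]
  | succ n ih =>
      rw [Finset.sum_range_succ, ih]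
      have h1 : g n ≤ g (n + 1) := le_of_lt (hg.1 (Nat.lt_succ_self n))
      have h2 := gadic_pos hg n
      omega

theorem gadic_partial_sums_inequality (g : ℕ → ℕ) (hg : GadicSeq g)
    (p q : ℕ) (u v x y : ℕ → ℕ)
    (hu : ∀ i j, 1 ≤ i → i < j → j ≤ p → u i < u j)
    (hx : ∀ i ∈ Finset.Icc 1 p, 1 ≤ x i ∧ x i ≤ g (u i + 1) / g (u i) - 1)
    (hy : ∀ j ∈ Finset.Icc 1 q, 1 ≤ y j ∧ y j ≤ g (v j + 1) / g (v j) - 1)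
    (heq : ∑ i ∈ Finset.Icc 1 p, x i * g (u i) = ∑ j ∈ Finset.Icc 1 q, y j * g (v j)) :
    ∀ k ∈ Finset.Icc 1 p,
      ∑ i ∈ (Finset.Icc 1 p).filter (fun i => u i ≤ u k), x i * g (u i) ≤
        ∑ j ∈ (Finset.Icc 1 q).filter (fun j => v j ≤ u k), y j * g (v j) := by
  intro k hk
  set m := u k with hm
  set d := g (m + 1) with hd
  set L := ∑ i ∈ (Finset.Icc 1 p).filter (fun i => u i ≤ m), x i * g (u i) with hL
  set R := ∑ j ∈ (Finset.Icc 1 q).filter (fun j => v j ≤ m), y j * g (v j) with hR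
  set HL := ∑ i ∈ (Finset.Icc 1 p).filter (fun i => ¬ u i ≤ m), x i * g (u i) with hHL
  set HR := ∑ j ∈ (Finset.Icc 1 q).filter (fun j => ¬ v j ≤ m), y j * g (v j) with hHR
  -- split equation
  have hsplit : L + HL = R + HR := by
    rw [hL, hHL, hR, hHR, Finset.sum_filter_add_sum_filter_not,
      Finset.sum_filter_add_sum_filter_not, heq]
  -- divisibility of high parts
  have hdvdL : d ∣ HL := by
    apply Finset.dvd_sum
    intro i hi
    simp only [Finset.mem_filter] at hi
    exact Dvd.dvd.mul_left (gadic_dvd_of_le hg (by omega)) _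
  have hdvdR : d ∣ HR := by
    apply Finset.dvd_sum
    intro j hj
    simp only [Finset.mem_filter] at hj
    exact Dvd.dvd.mul_left (gadic_dvd_of_le hg (by omega)) _
  -- L < d
  have hinj : Set.InjOn u ((Finset.Icc 1 p).filter (fun i => u i ≤ m) : Finset ℕ) := by
    intro a ha b hb hab
    simp only [Finset.coe_filter, Set.mem_setOf_eq, Finset.mem_Icc] at ha hb
    by_contra hne
    rcases lt_or_gt_of_ne hne with h | h
    · exact absurd hab (ne_of_lt (hu a b ha.1.1 h hb.1.2))
    · exact absurd hab.symm (ne_of_lt (hu b a hb.1.1 h ha.1.2))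
  have hLlt : L < d := by
    have h1 : L ≤ ∑ i ∈ (Finset.Icc 1 p).filter (fun i => u i ≤ m),
        (g (u i + 1) - g (u i)) := by
      apply Finset.sum_le_sum
      intro i hi
      simp only [Finset.mem_filter] at hi
      exact gadic_term_bound hg (hx i hi.1).2
    have h2 : ∑ i ∈ (Finset.Icc 1 p).filter (fun i => u i ≤ m), (g (u i + 1) - g (u i))
        = ∑ t ∈ ((Finset.Icc 1 p).filter (fun i => u i ≤ m)).image u,
            (g (t + 1) - g t) := by
      rw [Finset.sum_image (fun a ha b hb => hinj ha hb)]
    have h3 : ((Finset.Icc 1 p).filter (fun i => u i ≤ m)).image u ⊆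
        Finset.range (m + 1) := by
      intro t ht
      simp only [Finset.mem_image, Finset.mem_filter] at ht
      obtain ⟨i, hi, rfl⟩ := ht
      exact Finset.mem_range.mpr (by omega)
    have h4 : ∑ t ∈ ((Finset.Icc 1 p).filter (fun i => u i ≤ m)).image u,
        (g (t + 1) - g t) ≤ ∑ t ∈ Finset.range (m + 1), (g (t + 1) - g t) :=
      Finset.sum_le_sum_of_subset h3
    have h5 := gadic_telescope hg (m + 1)
    have h6 := gadic_pos hg (m + 1)
    omega
  -- finish
  by_contra hcon
  push_neg at hcon
  obtain ⟨a, ha⟩ := hdvdL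
  obtain ⟨b, hb⟩ := hdvdR
  have hba : a < b := by
    by_contra hba
    push_neg at hba
    have : d * b ≤ d * a := Nat.mul_le_mul_left d hba
    omega
  have hdb : d * a + d ≤ d * b := by
    have h := Nat.mul_le_mul_left d (show a + 1 ≤ b by omega)
    rw [Nat.mul_add, Nat.mul_one] at h
    exact h
  omega
end

section
/- Let W_0 and W_1 be nonempty disjoint sets of nonnegative integers with W_0 ∪ W_1 = ℕ₀, such that both W_0 and W_1 contain infinitely many pairs of consecutive integers. Let (g_i)_{i=0}^∞ be a G-adic sequence. Then the set A = A_G(W_0) ∪ A_G(W_1) is a minimal asymptotic basis of order 2. -/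
open Finset

/-- quotient -/
def Dq (g : ℕ → ℕ) (i : ℕ) : ℕ := g (i + 1) / g i

/-- digit -/
def dig (g : ℕ → ℕ) (i n : ℕ) : ℕ := n % g (i + 1) / g i

section basic
variable {g : ℕ → ℕ} (hg : GadicSeq g)
include hg

lemma g_pos (i : ℕ) : 0 < g i := by
  have h0 : g 0 ≤ g i := hg.1.monotone (Nat.zero_le i)
  have h1 : g 0 = 1 := hg.2.1
  omega

lemma g_mul (i : ℕ) : g (i + 1) = Dq g i * g i :=
  (Nat.div_mul_cancel (hg.2.2 i)).symm

lemma Dq_ge_two (i : ℕ) : 2 ≤ Dq g i := by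
  have h1 := g_pos hg i
  have h2 := hg.1 (show i < i + 1 by omega)
  have h3 := g_mul hg i
  nlinarith [h3]

lemma dig_lt (i n : ℕ) : dig g i n < Dq g i := by
  have h1 := g_pos hg i
  have h2 : n % g (i + 1) < g (i + 1) := Nat.mod_lt _ (g_pos hg (i + 1))
  have h3 := g_mul hg i
  have h4 : Dq g i * g i = g i * Dq g i := Nat.mul_comm _ _
  exact Nat.div_lt_of_lt_mul (by omega)

lemma mod_succ_eq (k n : ℕ) : n % g (k + 1) = n % g k + dig g k n * g k := by
  have h1 : n % g (k + 1) % g k = n % g k := Nat.mod_mod_of_dvd n (hg.2.2 k)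
  have h2 := Nat.div_add_mod (n % g (k + 1)) (g k)
  rw [Nat.mul_comm] at h2
  unfold dig
  omega

lemma g_dvd {i j : ℕ} (h : i ≤ j) : g i ∣ g j := by
  induction j with
  | zero => simpa using (Nat.le_zero.mp h) ▸ dvd_refl (g 0)
  | succ j ih =>
    rcases Nat.lt_or_ge i (j + 1) with h' | h'
    · exact (ih (by omega)).trans (hg.2.2 j)
    · have : i = j + 1 := by omega
      simp [this]
end basic

section sums
variable {g : ℕ → ℕ} (hg : GadicSeq g)
include hg

lemma geom_sum (k : ℕ) : ∑ i ∈ Finset.range k, (Dq g i - 1) * g i = g k - 1 := by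
  induction k with
  | zero => simp [hg.2.1]
  | succ k ih =>
    rw [Finset.sum_range_succ, ih]
    have h1 := g_mul hg k
    have h2 := Dq_ge_two hg k
    have h3 := g_pos hg k
    have h5 : g k < g (k + 1) := hg.1 (by omega)
    have h4 : (Dq g k - 1) * g k + g k = Dq g k * g k := by
      rw [Nat.sub_mul, one_mul]
      omega
    omega

lemma sum_filter_lt {F : Finset ℕ} {x : ℕ → ℕ} (hx : ∀ j ∈ F, x j < Dq g j) (k : ℕ) :
    ∑ j ∈ F.filter (· < k), x j * g j < g k := by
  have h1 : ∑ j ∈ F.filter (· < k), x j * g j ≤ g k - 1 := by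
    calc ∑ j ∈ F.filter (· < k), x j * g j
        ≤ ∑ j ∈ F.filter (· < k), (Dq g j - 1) * g j := by
          apply Finset.sum_le_sum
          intro j hj
          have := hx j (Finset.mem_filter.mp hj).1
          exact Nat.mul_le_mul_right _ (by omega)
      _ ≤ ∑ i ∈ Finset.range k, (Dq g i - 1) * g i := by
          apply Finset.sum_le_sum_of_subset
          intro a ha
          exact Finset.mem_range.mpr (Finset.mem_filter.mp ha).2
      _ = g k - 1 := geom_sum hg k
  have := g_pos hg k
  omega

lemma sum_mod {F : Finset ℕ} {x : ℕ → ℕ} (hx : ∀ j ∈ F, x j < Dq g j) (k : ℕ) :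
    (∑ j ∈ F, x j * g j) % g k = ∑ j ∈ F.filter (· < k), x j * g j := by
  classical
  have hsplit := Finset.sum_filter_add_sum_filter_not F (· < k) (fun j => x j * g j)
  have hdvd : g k ∣ ∑ j ∈ F.filter (fun j => ¬ j < k), x j * g j := by
    apply Finset.dvd_sum
    intro j hj
    exact Dvd.dvd.mul_left (g_dvd hg (by have := (Finset.mem_filter.mp hj).2; omega)) _
  obtain ⟨t, ht⟩ := hdvd
  rw [← hsplit, ht, Nat.add_mul_mod_self_left]
  exact Nat.mod_eq_of_lt (sum_filter_lt hg hx k)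

lemma dig_sum {F : Finset ℕ} {x : ℕ → ℕ} (hx : ∀ j ∈ F, x j < Dq g j) (i : ℕ) :
    dig g i (∑ j ∈ F, x j * g j) = if i ∈ F then x i else 0 := by
  classical
  have hlt := sum_filter_lt hg hx i
  unfold dig
  rw [sum_mod hg hx (i + 1)]
  by_cases hiF : i ∈ F
  · have hset : F.filter (· < i + 1) = insert i (F.filter (· < i)) := by
      ext a
      simp only [Finset.mem_filter, Finset.mem_insert]
      constructor
      · rintro ⟨ha, hl⟩
        rcases Nat.lt_or_ge a i with h | h
        · exact Or.inr ⟨ha, h⟩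
        · left; omega
      · rintro (rfl | ⟨ha, hl⟩)
        · exact ⟨hiF, by omega⟩
        · exact ⟨ha, by omega⟩
    rw [hset, Finset.sum_insert (by simp [Finset.mem_filter])]
    rw [Nat.add_comm, Nat.add_mul_div_right _ _ (g_pos hg i), Nat.div_eq_of_lt hlt]
    simp [hiF]
  · have hset : F.filter (· < i + 1) = F.filter (· < i) := by
      ext a
      simp only [Finset.mem_filter]
      constructor
      · rintro ⟨ha, hl⟩
        refine ⟨ha, ?_⟩
        rcases Nat.lt_or_ge a i with h | h
        · exact h
        · exfalso
          have heq : a = i := by omega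
          exact hiF (heq ▸ ha)
      · rintro ⟨ha, hl⟩; exact ⟨ha, by omega⟩
    rw [hset, Nat.div_eq_of_lt hlt]
    simp [hiF]

lemma expansion (n k : ℕ) : n % g k = ∑ i ∈ Finset.range k, dig g i n * g i := by
  induction k with
  | zero => simp [hg.2.1, Nat.mod_one]
  | succ k ih => rw [Finset.sum_range_succ, ← ih, mod_succ_eq hg]

lemma eq_of_dig_eq {a b : ℕ} (h : ∀ i, dig g i a = dig g i b) : a = b := by
  set K := a + b + 1 with hK
  have hga : a < g K := lt_of_lt_of_le (by omega) hg.1.le_apply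
  have hgb : b < g K := lt_of_lt_of_le (by omega) hg.1.le_apply
  calc a = a % g K := (Nat.mod_eq_of_lt hga).symm
    _ = ∑ i ∈ Finset.range K, dig g i a * g i := expansion hg a K
    _ = ∑ i ∈ Finset.range K, dig g i b * g i := by
        exact Finset.sum_congr rfl fun i _ => by rw [h i]
    _ = b % g K := (expansion hg b K).symm
    _ = b := Nat.mod_eq_of_lt hgb

omit hg in
lemma dig_support_bound {n i : ℕ} (h : dig g i n ≠ 0) : g i ≤ n := by
  have h2 : n % g (i + 1) ≤ n := Nat.mod_le _ _
  rcases Nat.lt_or_ge (n % g (i + 1)) (g i) with h' | h'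
  · exact absurd (Nat.div_eq_of_lt h') h
  · omega

lemma exists_rep {n : ℕ} (hn : 0 < n) :
    ∃ (F : Finset ℕ) (x : ℕ → ℕ), F.Nonempty ∧
      (∀ j ∈ F, 1 ≤ x j ∧ x j ≤ Dq g j - 1) ∧
      (∀ i, dig g i n = if i ∈ F then x i else 0) ∧
      n = ∑ j ∈ F, x j * g j := by
  classical
  set K := n + 1 with hK
  have hga : n < g K := lt_of_lt_of_le (by omega) hg.1.le_apply
  have hsum : n = ∑ i ∈ Finset.range K, dig g i n * g i := by
    rw [← expansion hg n K, Nat.mod_eq_of_lt hga]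
  set F := (Finset.range K).filter (fun i => dig g i n ≠ 0) with hF
  have hmem : ∀ i, i ∈ F ↔ dig g i n ≠ 0 := by
    intro i
    rw [hF, Finset.mem_filter, Finset.mem_range]
    constructor
    · exact fun h => h.2
    · intro h
      refine ⟨?_, h⟩
      have h1 := dig_support_bound h
      by_contra hcon
      push_neg at hcon
      have : g K ≤ g i := hg.1.monotone hcon
      omega
  have hsum2 : n = ∑ j ∈ F, dig g j n * g j := by
    have heq : ∑ j ∈ F, dig g j n * g j = ∑ i ∈ Finset.range K, dig g i n * g i := by
      apply Finset.sum_subset (Finset.filter_subset _ _)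
      intro i _ hiF
      have hz : dig g i n = 0 := by
        by_contra h
        exact hiF ((hmem i).mpr h)
      simp [hz]
    rw [heq]
    exact hsum
  refine ⟨F, fun i => dig g i n, ?_, ?_, ?_, hsum2⟩
  · rcases Finset.eq_empty_or_nonempty F with h | h
    · exfalso
      rw [h, Finset.sum_empty] at hsum2
      omega
    · exact h
  · intro j hj
    have h1 := (hmem j).mp hj
    have h2 := dig_lt hg j n
    show 1 ≤ dig g j n ∧ dig g j n ≤ Dq g j - 1
    omega
  · intro i
    by_cases hiF : i ∈ F
    · simp [hiF]
    · simp only [hiF, if_false]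
      by_contra h
      exact hiF ((hmem i).mpr h)

lemma AG_dig {W : Set ℕ} {n : ℕ} (h : n ∈ AG g W) :
    0 < n ∧ ∀ i, dig g i n ≠ 0 → i ∈ W := by
  obtain ⟨F, x, hFne, hFW, hx, hsum⟩ := h
  have hx' : ∀ j ∈ F, x j < Dq g j := by
    intro j hj
    have h1 := (hx j hj).2
    have h2 := Dq_ge_two hg j
    have h3 : Dq g j = g (j + 1) / g j := rfl
    omega
  constructor
  · obtain ⟨j, hj⟩ := hFne
    have h1 : 1 * 1 ≤ x j * g j :=
      Nat.mul_le_mul (hx j hj).1 (g_pos hg j)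
    calc 0 < x j * g j := by omega
      _ ≤ ∑ j ∈ F, x j * g j :=
          Finset.single_le_sum (f := fun j => x j * g j) (fun i _ => Nat.zero_le _) hj
      _ = n := hsum.symm
  · intro i hi
    rw [hsum, dig_sum hg hx'] at hi
    by_cases hiF : i ∈ F
    · exact hFW hiF
    · simp [hiF] at hi

end sums


section carry
variable {g : ℕ → ℕ} (hg : GadicSeq g)
include hg

/-- the carry when adding `a + b`, at level `k` -/
def carry (g : ℕ → ℕ) (a b k : ℕ) : ℕ := (a % g k + b % g k) / g k

omit hg in
lemma carry_le_one (a b k : ℕ) (hk : 0 < g k) : carry g a b k ≤ 1 := by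
  have h1 : a % g k < g k := Nat.mod_lt _ hk
  have h2 : b % g k < g k := Nat.mod_lt _ hk
  have : a % g k + b % g k < 2 * g k := by omega
  exact Nat.lt_succ_iff.mp (Nat.div_lt_of_lt_mul (by omega))

lemma carry_zero (a b : ℕ) : carry g a b 0 = 0 := by
  unfold carry
  simp [hg.2.1, Nat.mod_one]

lemma carry_rec {a b n : ℕ} (hab : a + b = n) (i : ℕ) :
    dig g i a + dig g i b + carry g a b i
      = dig g i n + Dq g i * carry g a b (i + 1) := by
  have gpos := g_pos hg i
  have e2 : ∀ k, a % g k + b % g k = n % g k + ((a % g k + b % g k) / g k) * g k := by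
    intro k
    have h1 := Nat.div_add_mod (a % g k + b % g k) (g k)
    have h2 : (a % g k + b % g k) % g k = n % g k := by
      rw [← hab]
      exact (Nat.add_mod a b (g k)).symm
    rw [Nat.mul_comm] at h1
    omega
  show dig g i a + dig g i b + (a % g i + b % g i) / g i
      = dig g i n + Dq g i * ((a % g (i + 1) + b % g (i + 1)) / g (i + 1))
  set C1 := (a % g (i + 1) + b % g (i + 1)) / g (i + 1) with hC1
  set C0 := (a % g i + b % g i) / g i with hC0
  have e2i := e2 i
  have e2s := e2 (i + 1)
  rw [← hC1, ← hC0] at *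
  rw [mod_succ_eq hg i a, mod_succ_eq hg i b, mod_succ_eq hg i n] at e2s
  have hgm := g_mul hg i
  have h3 : Dq g i * C1 * g i = C1 * g (i + 1) := by rw [hgm]; ring
  have key : (dig g i a + dig g i b + C0) * g i = (dig g i n + Dq g i * C1) * g i := by
    rw [Nat.add_mul, Nat.add_mul, Nat.add_mul]
    omega
  exact Nat.eq_of_mul_eq_mul_right gpos key

end carry

section partA
variable {g : ℕ → ℕ} (hg : GadicSeq g)
include hg

lemma mem_AG {W : Set ℕ} {F : Finset ℕ} {x : ℕ → ℕ} (hne : F.Nonempty) (hFW : ↑F ⊆ W)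
    (hx : ∀ j ∈ F, 1 ≤ x j ∧ x j ≤ Dq g j - 1) : (∑ j ∈ F, x j * g j) ∈ AG g W :=
  ⟨F, x, hne, hFW, hx, rfl⟩

lemma mem_AG_single {W : Set ℕ} {j y : ℕ} (hjW : j ∈ W) (h1 : 1 ≤ y) (h2 : y ≤ Dq g j - 1) :
    y * g j ∈ AG g W := by
  have h := mem_AG hg (W := W) (F := {j}) (x := fun _ => y)
    (Finset.singleton_nonempty j) (by simpa using hjW)
    (by intro i hi; simp only [Finset.mem_singleton] at hi; subst hi; exact ⟨h1, h2⟩)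
  simpa using h

lemma basis_of_two {W₀ W₁ : Set ℕ} (hunion : W₀ ∪ W₁ = Set.univ) {n : ℕ} (h2 : 2 ≤ n) :
    ∃ a b, a ∈ AG g W₀ ∪ AG g W₁ ∧ b ∈ AG g W₀ ∪ AG g W₁ ∧ a + b = n := by
  classical
  have hW : ∀ i : ℕ, i ∈ W₀ ∨ i ∈ W₁ := by
    intro i
    have : i ∈ W₀ ∪ W₁ := by rw [hunion]; trivial
    exact this
  obtain ⟨F, x, hne, hx, hdig, hsum⟩ := exists_rep hg (show 0 < n by omega)
  by_cases hsplit : (F.filter (· ∈ W₀)).Nonempty ∧ (F.filter (fun j => j ∉ W₀)).Nonempty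
  · obtain ⟨h0, h1⟩ := hsplit
    refine ⟨∑ j ∈ F.filter (· ∈ W₀), x j * g j, ∑ j ∈ F.filter (fun j => j ∉ W₀), x j * g j,
      Or.inl (mem_AG hg h0 ?_ ?_), Or.inr (mem_AG hg h1 ?_ ?_), ?_⟩
    · intro a ha
      simp only [Finset.coe_filter, Set.mem_setOf_eq] at ha
      exact ha.2
    · intro j hj
      exact hx j (Finset.mem_filter.mp hj).1
    · intro a ha
      simp only [Finset.coe_filter, Set.mem_setOf_eq] at ha
      rcases hW a with h | h
      · exact absurd h ha.2
      · exact h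
    · intro j hj
      exact hx j (Finset.mem_filter.mp hj).1
    · rw [hsum]
      exact Finset.sum_filter_add_sum_filter_not F (· ∈ W₀) _
  · have hFsub : (↑F : Set ℕ) ⊆ W₀ ∨ (↑F : Set ℕ) ⊆ W₁ := by
      rcases not_and_or.mp hsplit with h | h
      · right
        intro a ha
        simp only [Finset.not_nonempty_iff_eq_empty, Finset.filter_eq_empty_iff] at h
        rcases hW a with h' | h'
        · exact absurd h' (h (by exact_mod_cast ha))
        · exact h'
      · left
        intro a ha
        simp only [Finset.not_nonempty_iff_eq_empty, Finset.filter_eq_empty_iff] at h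
        have := h (show a ∈ F from by exact_mod_cast ha)
        simpa using this
    obtain ⟨W, hFW, hWor⟩ : ∃ W, (↑F : Set ℕ) ⊆ W ∧ (W = W₀ ∨ W = W₁) := by
      rcases hFsub with h | h
      · exact ⟨W₀, h, Or.inl rfl⟩
      · exact ⟨W₁, h, Or.inr rfl⟩
    have hWsub : AG g W ⊆ AG g W₀ ∪ AG g W₁ := by
      rcases hWor with rfl | rfl
      · exact Set.subset_union_left
      · exact Set.subset_union_right
    by_cases hcard : 1 < F.card
    · obtain ⟨j, hj⟩ := hne
      have herase : (F.erase j).Nonempty := by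
        apply Finset.card_pos.mp
        rw [Finset.card_erase_of_mem hj]
        omega
      refine ⟨x j * g j, ∑ i ∈ F.erase j, x i * g i,
        hWsub (mem_AG_single hg (hFW hj) (hx j hj).1 (hx j hj).2),
        hWsub (mem_AG hg herase ?_ ?_), ?_⟩
      · exact fun a ha => hFW (Finset.coe_subset.mpr (Finset.erase_subset _ _) ha)
      · exact fun i hi => hx i (Finset.mem_of_mem_erase hi)
      · rw [hsum]
        exact Finset.add_sum_erase F (fun i => x i * g i) hj
    · have hcard1 : F.card = 1 := by
        have := Finset.card_pos.mpr hne
        omega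
      obtain ⟨j, hFj⟩ := Finset.card_eq_one.mp hcard1
      subst hFj
      have hjF : j ∈ ({j} : Finset ℕ) := Finset.mem_singleton_self j
      have hxj := hx j hjF
      have hjW : j ∈ W := hFW (by simp)
      rw [Finset.sum_singleton] at hsum
      have hD := Dq_ge_two hg j
      by_cases hxj2 : 2 ≤ x j
      · refine ⟨1 * g j, (x j - 1) * g j,
          hWsub (mem_AG_single hg hjW (by omega) (by omega)),
          hWsub (mem_AG_single hg hjW (by omega) (by omega)), ?_⟩
        rw [← Nat.add_mul, hsum]
        congr 1
        omega
      · have hxj1 : x j = 1 := by omega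
        rw [hxj1, one_mul] at hsum
        cases j with
        | zero =>
          rw [hg.2.1] at hsum
          omega
        | succ j' =>
          have hD' := Dq_ge_two hg j'
          have hsum' : 1 * g j' + (Dq g j' - 1) * g j' = n := by
            rw [one_mul, Nat.sub_mul, one_mul, hsum, g_mul hg j']
            have : g j' ≤ Dq g j' * g j' := Nat.le_mul_of_pos_left _ (by omega)
            omega
          rcases hW j' with hj' | hj'
          · exact ⟨1 * g j', (Dq g j' - 1) * g j',
              Or.inl (mem_AG_single hg hj' (by omega) (by omega)),
              Or.inl (mem_AG_single hg hj' (by omega) (by omega)), hsum'⟩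
          · exact ⟨1 * g j', (Dq g j' - 1) * g j',
              Or.inr (mem_AG_single hg hj' (by omega) (by omega)),
              Or.inr (mem_AG_single hg hj' (by omega) (by omega)), hsum'⟩

end partA

section partB
variable {g : ℕ → ℕ} (hg : GadicSeq g)
include hg

lemma bounds_lt {F : Finset ℕ} {x : ℕ → ℕ} (hx : ∀ j ∈ F, 1 ≤ x j ∧ x j ≤ Dq g j - 1) :
    ∀ j ∈ F, x j < Dq g j := by
  intro j hj
  have h1 := (hx j hj).2
  have h2 := Dq_ge_two hg j
  omega

lemma astar_needed {W U : Set ℕ} (hdisj : Disjoint W U) (hunion : W ∪ U = Set.univ)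
    (hpairs : {m : ℕ | m ∈ U ∧ m + 1 ∈ U}.Infinite)
    {astar : ℕ} (ha : astar ∈ AG g W) (N : ℕ) :
    ∃ n ≥ N, ∀ a b : ℕ, a ∈ AG g W ∪ AG g U → b ∈ AG g W ∪ AG g U → a + b = n →
      a = astar ∨ b = astar := by
  classical
  have hWU : ∀ i : ℕ, i ∈ W ∨ i ∈ U := by
    intro i
    have : i ∈ W ∪ U := by rw [hunion]; trivial
    exact this
  obtain ⟨Fs, xs, hFne, hFW, hxs, hsumstar⟩ := ha
  set J := Fs.min' hFne with hJ
  have hJF : J ∈ Fs := Finset.min'_mem _ _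
  have hJW : J ∈ W := hFW hJF
  obtain ⟨m, hmS, hmgt⟩ := hpairs.exists_gt (max J N)
  obtain ⟨hmU, hm1U⟩ := hmS
  have hmJ : J < m := by omega
  have hmN : N < m := by omega
  set T := (Finset.range J).filter (· ∈ U) with hT
  have hmT : m ∉ T := by
    intro h
    have := (Finset.mem_filter.mp h).1
    rw [Finset.mem_range] at this
    omega
  have hm1T : m + 1 ∉ T := by
    intro h
    have := (Finset.mem_filter.mp h).1
    rw [Finset.mem_range] at this
    omega
  set Fb := insert m (insert (m + 1) T) with hFb
  set xb : ℕ → ℕ := fun i => if i < J then Dq g i - 1 else 1 with hxb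
  have hFbU : (↑Fb : Set ℕ) ⊆ U := by
    intro i hi
    simp only [hFb, Finset.coe_insert, Set.mem_insert_iff, Finset.mem_coe] at hi
    rcases hi with rfl | rfl | hi
    · exact hmU
    · exact hm1U
    · exact (Finset.mem_filter.mp hi).2
  have hxbb : ∀ j ∈ Fb, 1 ≤ xb j ∧ xb j ≤ Dq g j - 1 := by
    intro j _
    have hD := Dq_ge_two hg j
    by_cases h : j < J <;> simp [hxb, h] <;> omega
  set bstar := ∑ j ∈ Fb, xb j * g j with hbstar
  have hbmem : bstar ∈ AG g U :=
    mem_AG hg ⟨m, by simp [hFb]⟩ hFbU hxbb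
  set n := astar + bstar with hn
  have hnN : N ≤ n := by
    have h1 : g m ≤ bstar := by
      have hxbm : xb m = 1 := by
        simp only [hxb]
        rw [if_neg (by omega)]
      calc g m = xb m * g m := by rw [hxbm, one_mul]
        _ ≤ ∑ j ∈ Fb, xb j * g j :=
            Finset.single_le_sum (f := fun j => xb j * g j) (fun i _ => Nat.zero_le _)
              (by simp [hFb])
    have h2 : m ≤ g m := hg.1.le_apply
    omega
  -- combined representation of n
  have hdisjF : Disjoint Fs Fb := by
    rw [Finset.disjoint_left]
    intro i hi hib
    exact Set.disjoint_left.mp hdisj (hFW hi) (hFbU hib)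
  set Fn := Fs ∪ Fb with hFn
  set xn : ℕ → ℕ := fun i => if i ∈ Fs then xs i else xb i with hxn
  have hxnb : ∀ j ∈ Fn, 1 ≤ xn j ∧ xn j ≤ Dq g j - 1 := by
    intro j hj
    by_cases h : j ∈ Fs
    · simpa [hxn, h, Dq] using hxs j h
    · have hjb : j ∈ Fb := by
        rcases Finset.mem_union.mp hj with h' | h'
        · exact absurd h' h
        · exact h'
      simpa [hxn, h] using hxbb j hjb
  have hsumn : n = ∑ j ∈ Fn, xn j * g j := by
    rw [hFn, Finset.sum_union hdisjF, hn, hsumstar, hbstar]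
    congr 1
    · exact Finset.sum_congr rfl fun i hi => by simp [hxn, hi]
    · refine Finset.sum_congr rfl fun i hi => ?_
      have : i ∉ Fs := Finset.disjoint_right.mp hdisjF hi
      simp [hxn, this]
  have hdign : ∀ i, dig g i n = if i ∈ Fn then xn i else 0 := by
    intro i
    rw [hsumn]
    exact dig_sum hg (bounds_lt hg hxnb) i
  have hdigstar : ∀ i, dig g i astar = if i ∈ Fs then xs i else 0 := by
    intro i
    rw [hsumstar]
    exact dig_sum hg (bounds_lt hg hxs) i
  -- digit facts about n
  have hdig_m : dig g m n = 1 := by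
    have hmFs : m ∉ Fs := fun h => Set.disjoint_left.mp hdisj (hFW h) hmU
    rw [hdign m]
    simp [hFn, hFb, hmFs, hxn, hxb]
    omega
  have hdig_m1 : dig g (m + 1) n = 1 := by
    have hmFs : m + 1 ∉ Fs := fun h => Set.disjoint_left.mp hdisj (hFW h) hm1U
    rw [hdign (m + 1)]
    simp [hFn, hFb, hmFs, hxn, hxb]
    omega
  have hdig_J : 1 ≤ dig g J n := by
    rw [hdign J]
    have : J ∈ Fn := Finset.mem_union_left _ hJF
    simp [this, hxn, hJF]
    exact (hxs J hJF).1
  have hdig_U_lt : ∀ i, i ∈ U → i < J → dig g i n = Dq g i - 1 := by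
    intro i hiU hiJ
    have hiT : i ∈ T := Finset.mem_filter.mpr ⟨Finset.mem_range.mpr hiJ, hiU⟩
    have hiFs : i ∉ Fs := fun h => Set.disjoint_left.mp hdisj (hFW h) hiU
    rw [hdign i]
    have : i ∈ Fn := Finset.mem_union_right _ (by simp [hFb, hiT])
    simp [this, hxn, hiFs, hxb, hiJ]
  -- the main uniqueness argument
  refine ⟨n, hnN, ?_⟩
  intro a b hma hmb habn
  -- digit vanishing facts
  have hvan : ∀ (y : ℕ) (V : Set ℕ), y ∈ AG g V → ∀ i, i ∉ V → dig g i y = 0 := by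
    intro y V hy i hiV
    by_contra h
    exact hiV ((AG_dig hg hy).2 i h)
  have cle : ∀ k, carry g a b k ≤ 1 := fun k => carry_le_one a b k (g_pos hg k)
  have c0 : carry g a b 0 = 0 := carry_zero hg a b
  have crec : ∀ i, dig g i a + dig g i b + carry g a b i
      = dig g i n + Dq g i * carry g a b (i + 1) := carry_rec hg habn
  have digA : ∀ i, dig g i a < Dq g i := fun i => dig_lt hg i a
  have digB : ∀ i, dig g i b < Dq g i := fun i => dig_lt hg i b
  have hWnotU : ∀ i, i ∈ W → i ∉ U := fun i hi => Set.disjoint_left.mp hdisj hi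
  have hUnotW : ∀ i, i ∈ U → i ∉ W := fun i hi => Set.disjoint_right.mp hdisj hi
  -- Case: both parts have digits in W : contradiction at m, m+1
  have caseWW : a ∈ AG g W → b ∈ AG g W → False := by
    intro haW hbW
    have h1 : dig g m a = 0 := hvan a W haW m (hUnotW m hmU)
    have h2 : dig g m b = 0 := hvan b W hbW m (hUnotW m hmU)
    have h3 : dig g (m + 1) a = 0 := hvan a W haW (m + 1) (hUnotW (m + 1) hm1U)
    have h4 : dig g (m + 1) b = 0 := hvan b W hbW (m + 1) (hUnotW (m + 1) hm1U)
    have e1 := crec m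
    have e2 := crec (m + 1)
    rw [h1, h2, hdig_m] at e1
    rw [h3, h4, hdig_m1] at e2
    have hcm := cle m
    have hcm1 := cle (m + 1)
    have hcm2 := cle (m + 2)
    have hD := Dq_ge_two hg m
    have hD1 := Dq_ge_two hg (m + 1)
    -- from e1 : carry m = 1 + Dq * carry (m+1), carry m ≤ 1 ⇒ carry (m+1) = 0
    have hc1 : carry g a b (m + 1) = 0 := by
      rcases Nat.le_one_iff_eq_zero_or_eq_one.mp hcm1 with h | h
      · exact h
      · rw [h, Nat.mul_one] at e1; omega
    rw [hc1] at e2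
    -- e2 : 0 + 0 + 0 = 1 + Dq * carry (m+2) : contradiction
    omega
  -- Case: both parts have digits in U : descending carry chain contradiction
  have caseUU : a ∈ AG g U → b ∈ AG g U → False := by
    intro haU hbU
    have hvW : ∀ i, i ∈ W → dig g i a = 0 ∧ dig g i b = 0 := fun i hi =>
      ⟨hvan a U haU i (hWnotU i hi), hvan b U hbU i (hWnotU i hi)⟩
    -- carry at J equals 1
    have hcJ : carry g a b J = 1 := by
      have e := crec J
      obtain ⟨h1, h2⟩ := hvW J hJW
      rw [h1, h2] at e
      have := cle J
      have hD := Dq_ge_two hg J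
      rcases Nat.le_one_iff_eq_zero_or_eq_one.mp (cle (J + 1)) with h | h
      · rw [h, Nat.mul_zero] at e; omega
      · rw [h, Nat.mul_one] at e; omega
    -- descending chain: no i ≤ J can have carry 1
    have desc : ∀ i, i ≤ J → carry g a b i = 1 → False := by
      intro i
      induction i using Nat.strong_induction_on with
      | _ i IH =>
        intro hiJ hci
        cases i with
        | zero => omega
        | succ i' =>
          have e := crec i'
          rw [hci, Nat.mul_one] at e
          rcases hWU i' with hw | hu
          · obtain ⟨h1, h2⟩ := hvW i' hw
            have := cle i'
            have hD := Dq_ge_two hg i'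
            omega
          · have hdn := hdig_U_lt i' hu (by omega)
            rw [hdn] at e
            have hda := digA i'
            have hdb := digB i'
            have hD := Dq_ge_two hg i'
            have hci' : carry g a b i' = 1 := by
              have := cle i'
              omega
            exact IH i' (by omega) (by omega) hci'
    exact desc J le_rfl hcJ
  -- Case: mixed : forces the W-part to equal astar
  have caseWU : ∀ a' b', a' + b' = n → a' ∈ AG g W → b' ∈ AG g U → a' = astar := by
    intro a' b' hab' haW hbU
    have cle' : ∀ k, carry g a' b' k ≤ 1 := fun k => carry_le_one a' b' k (g_pos hg k)
    have crec' : ∀ i, dig g i a' + dig g i b' + carry g a' b' i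
        = dig g i n + Dq g i * carry g a' b' (i + 1) := carry_rec hg hab'
    have hnc : ∀ i, carry g a' b' i = 0 := by
      intro i
      induction i with
      | zero => exact carry_zero hg a' b'
      | succ i ih =>
        have e := crec' i
        rw [ih] at e
        have hone : dig g i a' + dig g i b' < Dq g i := by
          rcases hWU i with hw | hu
          · have : dig g i b' = 0 := hvan b' U hbU i (hWnotU i hw)
            rw [this]
            simpa using dig_lt hg i a'
          · have : dig g i a' = 0 := hvan a' W haW i (hUnotW i hu)
            rw [this]
            simpa using dig_lt hg i b'
        rcases Nat.le_one_iff_eq_zero_or_eq_one.mp (cle' (i + 1)) with h | h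
        · exact h
        · rw [h, Nat.mul_one] at e; omega
    have hdeq : ∀ i, dig g i a' + dig g i b' = dig g i n := by
      intro i
      have e := crec' i
      rw [hnc i, hnc (i + 1)] at e
      omega
    apply eq_of_dig_eq hg
    intro i
    rcases hWU i with hw | hu
    · have hb0 : dig g i b' = 0 := hvan b' U hbU i (hWnotU i hw)
      have ha' : dig g i a' = dig g i n := by
        have := hdeq i
        omega
      rw [ha', hdign i, hdigstar i]
      have hiFb : i ∉ Fb := fun h => (hWnotU i hw) (hFbU h)
      by_cases hiFs : i ∈ Fs
      · simp [hFn, hiFs, hxn]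
      · simp [hFn, hiFs, hiFb, hxn]
    · have ha0 : dig g i a' = 0 := hvan a' W haW i (hUnotW i hu)
      have hs0 : dig g i astar = 0 := by
        rw [hdigstar i]
        have : i ∉ Fs := fun h => (hUnotW i hu) (hFW h)
        simp [this]
      rw [ha0, hs0]
  rcases hma with haW | haU <;> rcases hmb with hbW | hbU
  · exact absurd (caseWW haW hbW) (fun h => h)
  · exact Or.inl (caseWU a b habn haW hbU)
  · exact Or.inr (caseWU b a (by omega) hbW haU)
  · exact absurd (caseUU haU hbU) (fun h => h)

end partB

theorem gadic_minimal_asymptotic_basis_order_two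
    (W₀ W₁ : Set ℕ) (hW₀ : W₀.Nonempty) (hW₁ : W₁.Nonempty)
    (hdisj : Disjoint W₀ W₁) (hunion : W₀ ∪ W₁ = Set.univ)
    (hpairs₀ : {m : ℕ | m ∈ W₀ ∧ m + 1 ∈ W₀}.Infinite)
    (hpairs₁ : {m : ℕ | m ∈ W₁ ∧ m + 1 ∈ W₁}.Infinite)
    (g : ℕ → ℕ) (hg : GadicSeq g) :
    MinAsympBasis 2 (AG g W₀ ∪ AG g W₁) := by
  constructor
  · refine ⟨2, fun n hn => ?_⟩
    obtain ⟨a, b, hma, hmb, hab⟩ := basis_of_two hg hunion hn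
    refine ⟨![a, b], ?_, ?_⟩
    · intro i
      fin_cases i <;> simpa
    · simp [Fin.sum_univ_two]
      omega
  · intro B hB hbasis
    obtain ⟨astar, hastarA, hastarB⟩ := Set.exists_of_ssubset hB
    obtain ⟨N, hN⟩ := hbasis
    have key : ∃ n ≥ N, ∀ a b : ℕ, a ∈ AG g W₀ ∪ AG g W₁ → b ∈ AG g W₀ ∪ AG g W₁ →
        a + b = n → a = astar ∨ b = astar := by
      rcases hastarA with h | h
      · exact astar_needed hg hdisj hunion hpairs₁ h N
      · obtain ⟨n, hnN, huni⟩ :=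
          astar_needed hg hdisj.symm (by rw [Set.union_comm]; exact hunion) hpairs₀ h N
        refine ⟨n, hnN, fun a b hma hmb hab => ?_⟩
        exact huni a b (Or.symm hma) (Or.symm hmb) hab
    obtain ⟨n, hnN, huni⟩ := key
    obtain ⟨f, hf, hfs⟩ := hN n hnN
    have hsum2 : f 0 + f 1 = n := by
      rw [hfs, Fin.sum_univ_two]
    have h0 : f 0 ∈ AG g W₀ ∪ AG g W₁ := hB.subset (hf 0)
    have h1 : f 1 ∈ AG g W₀ ∪ AG g W₁ := hB.subset (hf 1)
    rcases huni (f 0) (f 1) h0 h1 hsum2 with h | h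
    · exact hastarB (h ▸ hf 0)
    · exact hastarB (h ▸ hf 1)
end
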